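/- Let ψ : [2, ∞) → ℝ and define Ψ(x) = ψ(x)/log(x) + ∫₂^x ψ(t)/(t (log t)²) dt. Suppose there are constants C > 0, c > 0, and an integer n ≥ 1 such that |ψ(t)| ≤ C n³ t exp(−c log t / (n⁴ (√(log t) + n³))) for all t ≥ 2. Then there exist constants C' , c' > 0 depending only on C and c (not on n or x) such that |Ψ(x)| ≤ C' n³ x exp(−c' log x / (n⁴ (√(log x) + n³))) for all x ≥ 2. -/

import Mathlib

open Real intervalIntegral

set_option maxHeartbeats 1000000 in
theorem abel_summation_transfer (C c : ℝ) (hC : 0 < C) (hc : 0 < c) :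
    ∃ C' c' : ℝ, 0 < C' ∧ 0 < c' ∧
      ∀ (ψ : ℝ → ℝ) (n : ℕ), 1 ≤ n →
        (∀ t : ℝ, 2 ≤ t →
          |ψ t| ≤ C * (n : ℝ) ^ 3 * t *
            Real.exp (-c * Real.log t / ((n : ℝ) ^ 4 * (Real.sqrt (Real.log t) + (n : ℝ) ^ 3)))) →
        ∀ x : ℝ, 2 ≤ x →
          |ψ x / Real.log x + ∫ t in (2:ℝ)..x, ψ t / (t * Real.log t ^ 2)|
            ≤ C' * (n : ℝ) ^ 3 * x *
                Real.exp (-c' * Real.log x /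
                  ((n : ℝ) ^ 4 * (Real.sqrt (Real.log x) + (n : ℝ) ^ 3))) := by
  have hlog2 : (0:ℝ) < Real.log 2 := Real.log_pos one_lt_two
  refine ⟨C / Real.log 2 + 2 * C / Real.log 2 ^ 2, min c (1/2), by positivity,
    lt_min hc (by norm_num), ?_⟩
  intro ψ n hn hψ x hx
  have hx0 : (0:ℝ) < x := by linarith
  have hn1 : (1:ℝ) ≤ (n:ℝ) := by exact_mod_cast hn
  have hn3 : (1:ℝ) ≤ (n:ℝ)^3 := one_le_pow₀ hn1
  have hn4 : (1:ℝ) ≤ (n:ℝ)^4 := one_le_pow₀ hn1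
  set L := Real.log x with hLdef
  have hL2 : Real.log 2 ≤ L := Real.log_le_log two_pos hx
  have hLpos : 0 < L := lt_of_lt_of_le hlog2 hL2
  set D := (n:ℝ)^4 * (Real.sqrt L + (n:ℝ)^3) with hDdef
  have hsL : 0 ≤ Real.sqrt L := Real.sqrt_nonneg _
  have hD1 : (1:ℝ) ≤ D := by nlinarith
  have hD0 : (0:ℝ) < D := by linarith
  set a := min (c / D) (1/2 : ℝ) with hadef
  have ha0 : 0 < a := lt_min (div_pos hc hD0) (by norm_num)
  have haD : a ≤ c / D := min_le_left _ _
  have hahalf : a ≤ 1/2 := min_le_right _ _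
  set c' := min c (1/2 : ℝ) with hc'def
  have hc'c : c' ≤ c := min_le_left _ _
  have hc'D : c' / D ≤ a := by
    refine le_min (div_le_div₀ hc.le hc'c hD0 le_rfl) ?_
    calc c' / D ≤ (1/2) / 1 := div_le_div₀ (by norm_num) (min_le_right _ _) one_pos hD1
      _ = 1/2 := by norm_num
  set E' := Real.exp (-c' * L / D) with hE'def
  have hE'0 : 0 < E' := Real.exp_pos _
  have hEa : Real.exp (-a * L) ≤ E' := by
    rw [hE'def]
    apply Real.exp_le_exp.mpr
    have h1 : -c' * L / D = -(c'/D) * L := by ring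
    rw [h1]
    nlinarith
  set K := C * (n:ℝ)^3 / Real.log 2 ^ 2 with hKdef
  have hK0 : 0 < K := by positivity
  -- first term bound
  have hA : |ψ x / Real.log x| ≤ (C / Real.log 2) * (n:ℝ)^3 * x * E' := by
    have hbx := hψ x hx
    have hEcx : Real.exp (-c * L / D) ≤ E' := by
      rw [hE'def]
      apply Real.exp_le_exp.mpr
      have hLD : 0 ≤ L / D := by positivity
      have : -c * L / D = -c * (L/D) := by ring
      rw [this]
      have : -c' * L / D = -c' * (L/D) := by ring
      rw [this]
      nlinarith
    rw [abs_div, abs_of_pos hLpos]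
    have hx' : 0 ≤ C * (n:ℝ)^3 * x := mul_nonneg (by positivity) hx0.le
    calc |ψ x| / L ≤ (C * (n:ℝ)^3 * x * Real.exp (-c * L / D)) / Real.log 2 := by
          apply div_le_div₀ (mul_nonneg hx' (Real.exp_pos _).le) hbx hlog2 hL2
      _ ≤ (C * (n:ℝ)^3 * x * E') / Real.log 2 := by
          apply div_le_div₀ (mul_nonneg hx' hE'0.le)
            (mul_le_mul_of_nonneg_left hEcx hx') hlog2 le_rfl
      _ = (C / Real.log 2) * (n:ℝ)^3 * x * E' := by ring
  -- pointwise bound on the integrand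
  have key : ∀ t ∈ Set.Icc (2:ℝ) x,
      |ψ t / (t * Real.log t ^ 2)| ≤ K * t ^ (-a) := by
    rintro t ⟨h2t, htx⟩
    have ht0 : (0:ℝ) < t := by linarith
    have hu2 : Real.log 2 ≤ Real.log t := Real.log_le_log two_pos h2t
    have hu0 : 0 < Real.log t := lt_of_lt_of_le hlog2 hu2
    have huL : Real.log t ≤ L := Real.log_le_log ht0 htx
    have hsu : Real.sqrt (Real.log t) ≤ Real.sqrt L := Real.sqrt_le_sqrt huL
    set dU := (n:ℝ)^4 * (Real.sqrt (Real.log t) + (n:ℝ)^3) with hdUdef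
    have hsu0 : 0 ≤ Real.sqrt (Real.log t) := Real.sqrt_nonneg _
    have hdU0 : 0 < dU := by
      have h4 : (0:ℝ) < (n:ℝ)^4 := by linarith
      have h5 : (0:ℝ) < Real.sqrt (Real.log t) + (n:ℝ)^3 := by linarith
      exact mul_pos h4 h5
    have hdUD : dU ≤ D := by
      apply mul_le_mul_of_nonneg_left (by linarith : Real.sqrt (Real.log t) + (n:ℝ)^3 ≤ Real.sqrt L + (n:ℝ)^3) (by positivity)
    have hden : 0 < t * Real.log t ^ 2 := mul_pos ht0 (pow_pos hu0 2)
    have hEt : Real.exp (-c * Real.log t / dU) ≤ t ^ (-a) := by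
      rw [Real.rpow_def_of_pos ht0]
      apply Real.exp_le_exp.mpr
      have hacd : a ≤ c / dU := haD.trans (div_le_div_of_nonneg_left hc.le hdU0 hdUD)
      have h1 : a * Real.log t ≤ (c / dU) * Real.log t :=
        mul_le_mul_of_nonneg_right hacd hu0.le
      have h2 : (c / dU) * Real.log t = c * Real.log t / dU := by ring
      rw [h2] at h1
      have h3 : -c * Real.log t / dU = -(c * Real.log t / dU) := by ring
      have h4 : Real.log t * -a = -(a * Real.log t) := by ring
      rw [h3, h4]
      exact neg_le_neg h1
    rw [abs_div, abs_of_pos hden]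
    calc |ψ t| / (t * Real.log t ^ 2)
        ≤ (C * (n:ℝ)^3 * t * Real.exp (-c * Real.log t / dU)) / (t * Real.log 2 ^ 2) := by
          have hnum : 0 ≤ C * (n:ℝ)^3 * t * Real.exp (-c * Real.log t / dU) :=
            mul_nonneg (mul_nonneg (by positivity) ht0.le) (Real.exp_pos _).le
          have hdd : t * Real.log 2 ^ 2 ≤ t * Real.log t ^ 2 :=
            mul_le_mul_of_nonneg_left (pow_le_pow_left₀ hlog2.le hu2 2) ht0.le
          exact div_le_div₀ hnum (hψ t h2t) (by positivity) hdd
      _ = K * Real.exp (-c * Real.log t / dU) := by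
          rw [hKdef]
          field_simp
      _ ≤ K * t ^ (-a) := mul_le_mul_of_nonneg_left hEt hK0.le
  -- integral bound
  have hB : |∫ t in (2:ℝ)..x, ψ t / (t * Real.log t ^ 2)|
      ≤ (2 * C / Real.log 2 ^ 2) * (n:ℝ)^3 * x * E' := by
    have hRHS0 : 0 ≤ (2 * C / Real.log 2 ^ 2) * (n:ℝ)^3 * x * E' := by positivity
    by_cases hint : IntervalIntegrable (fun t => ψ t / (t * Real.log t ^ 2))
        MeasureTheory.volume 2 x
    · have hKint : IntervalIntegrable (fun t : ℝ => K * t ^ (-a))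
          MeasureTheory.volume 2 x :=
        (intervalIntegrable_rpow' (by linarith : (-1:ℝ) < -a)).const_mul K
      have hxex : Real.exp (Real.log x * -a) ≤ E' := by
        rw [mul_comm]
        exact hEa
      calc |∫ t in (2:ℝ)..x, ψ t / (t * Real.log t ^ 2)|
          ≤ ∫ t in (2:ℝ)..x, |ψ t / (t * Real.log t ^ 2)| :=
            intervalIntegral.abs_integral_le_integral_abs hx
        _ ≤ ∫ t in (2:ℝ)..x, K * t ^ (-a) := by
            apply intervalIntegral.integral_mono_on hx hint.abs hKint key
        _ = K * ∫ t in (2:ℝ)..x, t ^ (-a) := intervalIntegral.integral_const_mul _ _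
        _ = K * ((x ^ (-a + 1) - 2 ^ (-a + 1)) / (-a + 1)) := by
            rw [integral_rpow (Or.inl (by linarith))]
        _ ≤ K * (2 * x ^ (-a + 1)) := by
            apply mul_le_mul_of_nonneg_left _ hK0.le
            have h2p : (0:ℝ) ≤ (2:ℝ) ^ (-a + 1) := Real.rpow_nonneg (by norm_num) _
            have hxp : (0:ℝ) ≤ x ^ (-a + 1) := Real.rpow_nonneg hx0.le _
            have hq : (1:ℝ)/2 ≤ -a + 1 := by linarith
            have hq0 : (0:ℝ) < -a + 1 := by linarith
            rw [div_le_iff₀ hq0]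
            nlinarith [mul_le_mul_of_nonneg_left hq hxp]
        _ = 2 * K * (x * Real.exp (Real.log x * -a)) := by
            rw [Real.rpow_add hx0, Real.rpow_one, Real.rpow_def_of_pos hx0]
            ring
        _ ≤ 2 * K * (x * E') := by
            apply mul_le_mul_of_nonneg_left _ (by positivity)
            exact mul_le_mul_of_nonneg_left hxex hx0.le
        _ = (2 * C / Real.log 2 ^ 2) * (n:ℝ)^3 * x * E' := by
            rw [hKdef]; ring
    · rw [intervalIntegral.integral_undef hint, abs_zero]
      exact hRHS0
  calc |ψ x / Real.log x + ∫ t in (2:ℝ)..x, ψ t / (t * Real.log t ^ 2)|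
      ≤ |ψ x / Real.log x| + |∫ t in (2:ℝ)..x, ψ t / (t * Real.log t ^ 2)| := abs_add_le _ _
    _ ≤ (C / Real.log 2) * (n:ℝ)^3 * x * E' + (2 * C / Real.log 2 ^ 2) * (n:ℝ)^3 * x * E' :=
        add_le_add hA hB
    _ = (C / Real.log 2 + 2 * C / Real.log 2 ^ 2) * (n:ℝ)^3 * x * E' := by ring
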